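/- arXiv:1012.3056 — 4 statements merged into one kernel-verified Lean document; each statement's English description precedes it below -/
import Mathlib

section
/- Let η and η̃ be random variables taking values in the natural numbers {0,1,2,...}, each with finite second moment, and suppose they have equal finite positive means E[η] = E[η̃] > 0. If η is smaller than η̃ in the length-biased probability generating function ordering, i.e. for every s ∈ [0,1] one has E[1{η ≥ 1}·η·s^{η−1}] ≥ E[1{η̃ ≥ 1}·η̃·s^{η̃−1}], then Var[η] ≤ Var[η̃]. -/
open MeasureTheory ProbabilityTheory Filter

private def Tfun (n : ℕ) (s : ℝ) : ℝ := (n : ℝ) * ∑ i ∈ Finset.range (n - 1), s ^ i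

private lemma geom_aux (s : ℝ) (m : ℕ) :
    (1 - s) * ∑ i ∈ Finset.range m, s ^ i = 1 - s ^ m := by
  have h := geom_sum_mul s m
  have h2 : (1 - s) * ∑ i ∈ Finset.range m, s ^ i
      = -((∑ i ∈ Finset.range m, s ^ i) * (s - 1)) := by ring
  rw [h2, h]; ring

private lemma T_id (n : ℕ) (s : ℝ) :
    (1 - s) * Tfun n s = (n : ℝ) - (n : ℝ) * s ^ (n - 1) := by
  unfold Tfun
  rw [show (1 - s) * ((n:ℝ) * ∑ i ∈ Finset.range (n-1), s ^ i)
      = (n:ℝ) * ((1-s) * ∑ i ∈ Finset.range (n-1), s ^ i) by ring, geom_aux]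
  ring

private lemma T_nonneg (n : ℕ) {s : ℝ} (h0 : 0 ≤ s) : 0 ≤ Tfun n s := by
  unfold Tfun
  exact mul_nonneg (by positivity) (Finset.sum_nonneg fun i _ => pow_nonneg h0 i)

private lemma Q_eq (n : ℕ) : (n : ℝ) * ((n - 1 : ℕ) : ℝ) = (n:ℝ)^2 - n := by
  cases n with
  | zero => simp
  | succ k => push_cast [Nat.succ_sub_one]; ring

private lemma T_le (n : ℕ) {s : ℝ} (h0 : 0 ≤ s) (h1 : s ≤ 1) :
    Tfun n s ≤ (n : ℝ) * ((n - 1 : ℕ) : ℝ) := by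
  unfold Tfun
  refine mul_le_mul_of_nonneg_left ?_ (by positivity)
  calc ∑ i ∈ Finset.range (n-1), s ^ i ≤ ∑ _i ∈ Finset.range (n-1), (1:ℝ) :=
        Finset.sum_le_sum fun i _ => pow_le_one₀ h0 h1
    _ = ((n-1:ℕ):ℝ) := by simp

private lemma T_one (n : ℕ) : Tfun n 1 = (n : ℝ) * ((n - 1 : ℕ) : ℝ) := by
  simp [Tfun]

private lemma Q_nonneg (n : ℕ) : 0 ≤ (n : ℝ) * ((n - 1 : ℕ) : ℝ) := by positivity

private lemma Q_le_sq (n : ℕ) : (n : ℝ) * ((n - 1 : ℕ) : ℝ) ≤ (n:ℝ)^2 := by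
  rw [Q_eq]; have : (0:ℝ) ≤ n := Nat.cast_nonneg n; linarith

/-- If `η` and `η̃` are ℕ-valued random variables with finite second moments, equal
finite positive means, and `η` is smaller than `η̃` in the length-biased probability
generating function ordering, then `Var[η] ≤ Var[η̃]`. -/
theorem variance_le_of_lengthBiased_pgf_order
    {Ω : Type*} [MeasurableSpace Ω] (μ : Measure Ω) [IsProbabilityMeasure μ]
    (η η' : Ω → ℕ) (hη : Measurable η) (hη' : Measurable η')
    (h2 : MemLp (fun ω => (η ω : ℝ)) 2 μ)
    (h2' : MemLp (fun ω => (η' ω : ℝ)) 2 μ)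
    (hmean : μ[fun ω => (η ω : ℝ)] = μ[fun ω => (η' ω : ℝ)])
    (hpos : 0 < μ[fun ω => (η ω : ℝ)])
    (hord : ∀ s ∈ Set.Icc (0 : ℝ) 1,
      μ[fun ω => (η' ω : ℝ) * s ^ (η' ω - 1)] ≤ μ[fun ω => (η ω : ℝ) * s ^ (η ω - 1)]) :
    variance (fun ω => (η ω : ℝ)) μ ≤ variance (fun ω => (η' ω : ℝ)) μ := by
  have hint : Integrable (fun ω => (η ω : ℝ)) μ := h2.integrable one_le_two
  have hint' : Integrable (fun ω => (η' ω : ℝ)) μ := h2'.integrable one_le_two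
  have hsq : Integrable (fun ω => (η ω : ℝ)^2) μ := h2.integrable_sq
  have hsq' : Integrable (fun ω => (η' ω : ℝ)^2) μ := h2'.integrable_sq
  have meas : ∀ (f : ℕ → ℝ), Measurable (fun ω => f (η ω)) :=
    fun f => (measurable_from_top).comp hη
  have meas' : ∀ (f : ℕ → ℝ), Measurable (fun ω => f (η' ω)) :=
    fun f => (measurable_from_top).comp hη'
  have hQint : Integrable (fun ω => (η ω : ℝ) * ((η ω - 1 : ℕ):ℝ)) μ := by
    have he : (fun ω => (η ω : ℝ) * ((η ω - 1:ℕ):ℝ)) = fun ω => (η ω:ℝ)^2 - (η ω:ℝ) := by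
      funext ω; exact Q_eq _
    rw [he]; exact hsq.sub hint
  have hQint' : Integrable (fun ω => (η' ω : ℝ) * ((η' ω - 1 : ℕ):ℝ)) μ := by
    have he : (fun ω => (η' ω : ℝ) * ((η' ω - 1:ℕ):ℝ)) = fun ω => (η' ω:ℝ)^2 - (η' ω:ℝ) := by
      funext ω; exact Q_eq _
    rw [he]; exact hsq'.sub hint'
  -- integrability of η s^{η-1}
  have hintS : ∀ s : ℝ, 0 ≤ s → s ≤ 1 → Integrable (fun ω => (η ω:ℝ) * s ^ (η ω - 1)) μ := by
    intro s h0 h1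
    refine hint.mono (meas (fun n => (n:ℝ) * s^(n-1))).aestronglyMeasurable
      (ae_of_all _ fun ω => ?_)
    simp only [Real.norm_eq_abs, abs_mul]
    rw [abs_of_nonneg (Nat.cast_nonneg _), abs_of_nonneg (pow_nonneg h0 _)]
    calc (η ω:ℝ) * s ^ (η ω - 1) ≤ (η ω:ℝ) * 1 :=
          mul_le_mul_of_nonneg_left (pow_le_one₀ h0 h1) (Nat.cast_nonneg _)
      _ = (η ω:ℝ) := mul_one _
  have hintS' : ∀ s : ℝ, 0 ≤ s → s ≤ 1 → Integrable (fun ω => (η' ω:ℝ) * s ^ (η' ω - 1)) μ := by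
    intro s h0 h1
    refine hint'.mono (meas' (fun n => (n:ℝ) * s^(n-1))).aestronglyMeasurable
      (ae_of_all _ fun ω => ?_)
    simp only [Real.norm_eq_abs, abs_mul]
    rw [abs_of_nonneg (Nat.cast_nonneg _), abs_of_nonneg (pow_nonneg h0 _)]
    calc (η' ω:ℝ) * s ^ (η' ω - 1) ≤ (η' ω:ℝ) * 1 :=
          mul_le_mul_of_nonneg_left (pow_le_one₀ h0 h1) (Nat.cast_nonneg _)
      _ = (η' ω:ℝ) := mul_one _
  -- integrability of T
  have hintT : ∀ s : ℝ, 0 ≤ s → s ≤ 1 → Integrable (fun ω => Tfun (η ω) s) μ := by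
    intro s h0 h1
    refine hsq.mono (meas (fun n => Tfun n s)).aestronglyMeasurable (ae_of_all _ fun ω => ?_)
    rw [Real.norm_eq_abs, Real.norm_eq_abs, abs_of_nonneg (T_nonneg _ h0),
      abs_of_nonneg (by positivity)]
    exact (T_le _ h0 h1).trans (Q_le_sq _)
  have hintT' : ∀ s : ℝ, 0 ≤ s → s ≤ 1 → Integrable (fun ω => Tfun (η' ω) s) μ := by
    intro s h0 h1
    refine hsq'.mono (meas' (fun n => Tfun n s)).aestronglyMeasurable (ae_of_all _ fun ω => ?_)
    rw [Real.norm_eq_abs, Real.norm_eq_abs, abs_of_nonneg (T_nonneg _ h0),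
      abs_of_nonneg (by positivity)]
    exact (T_le _ h0 h1).trans (Q_le_sq _)
  -- key bound for s < 1
  have key : ∀ s : ℝ, 0 ≤ s → s < 1 →
      μ[fun ω => Tfun (η ω) s] ≤ μ[fun ω => (η' ω:ℝ) * ((η' ω - 1:ℕ):ℝ)] := by
    intro s h0 h1
    have hc : (0:ℝ) < 1 - s := by linarith
    rw [← mul_le_mul_iff_right₀ hc]
    have step1 : (1-s) * μ[fun ω => Tfun (η ω) s]
        = μ[fun ω => (η ω:ℝ)] - μ[fun ω => (η ω:ℝ) * s ^ (η ω - 1)] := by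
      rw [← integral_const_mul]
      simp_rw [T_id]
      rw [integral_sub hint (hintS s h0 h1.le)]
    have step2 : (1-s) * μ[fun ω => Tfun (η' ω) s]
        = μ[fun ω => (η' ω:ℝ)] - μ[fun ω => (η' ω:ℝ) * s ^ (η' ω - 1)] := by
      rw [← integral_const_mul]
      simp_rw [T_id]
      rw [integral_sub hint' (hintS' s h0 h1.le)]
    have hord' := hord s ⟨h0, h1.le⟩
    have step3 : (1-s) * μ[fun ω => Tfun (η ω) s] ≤ (1-s) * μ[fun ω => Tfun (η' ω) s] := by
      rw [step1, step2, ← hmean]; linarith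
    refine step3.trans (mul_le_mul_of_nonneg_left ?_ hc.le)
    exact integral_mono (hintT' s h0 h1.le) hQint' fun ω => T_le _ h0 h1.le
  -- take the limit s → 1⁻ along s k = 1 - 1/(k+1)
  set sk : ℕ → ℝ := fun k => 1 - 1/(k+1 : ℝ) with hsk
  have hsk0 : ∀ k, 0 ≤ sk k := by
    intro k
    have : 1/(k+1:ℝ) ≤ 1 := by
      rw [div_le_one (by positivity)]
      have : (0:ℝ) ≤ k := Nat.cast_nonneg k
      linarith
    simp only [hsk]; linarith
  have hsk1 : ∀ k, sk k < 1 := by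
    intro k
    have : 0 < 1/(k+1:ℝ) := by positivity
    simp only [hsk]; linarith
  have hsklim : Tendsto sk atTop (nhds 1) := by
    have h0 : Tendsto (fun k : ℕ => 1/(k+1:ℝ)) atTop (nhds 0) :=
      tendsto_one_div_add_atTop_nhds_zero_nat
    simpa [hsk, one_div] using h0.const_sub 1
  have hTcont : ∀ n : ℕ, Continuous (fun s : ℝ => Tfun n s) := by
    intro n
    exact continuous_const.mul (continuous_finset_sum _ fun i _ => continuous_pow i)
  -- dominated convergence
  have hlim : Tendsto (fun k => μ[fun ω => Tfun (η ω) (sk k)]) atTop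
      (nhds (μ[fun ω => (η ω:ℝ) * ((η ω - 1:ℕ):ℝ)])) := by
    have hconv : ∀ᵐ ω ∂μ, Tendsto (fun k => Tfun (η ω) (sk k)) atTop
        (nhds ((η ω:ℝ) * ((η ω - 1:ℕ):ℝ))) := by
      refine ae_of_all _ fun ω => ?_
      have := ((hTcont (η ω)).tendsto 1).comp hsklim
      rwa [T_one] at this
    refine tendsto_integral_of_dominated_convergence (fun ω => (η ω:ℝ)^2)
      (fun k => (meas (fun n => Tfun n (sk k))).aestronglyMeasurable) hsq ?_ hconv
    intro k
    refine ae_of_all _ fun ω => ?_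
    rw [Real.norm_eq_abs, abs_of_nonneg (T_nonneg _ (hsk0 k))]
    exact (T_le _ (hsk0 k) (hsk1 k).le).trans (Q_le_sq _)
  have hQle : μ[fun ω => (η ω:ℝ) * ((η ω - 1:ℕ):ℝ)]
      ≤ μ[fun ω => (η' ω:ℝ) * ((η' ω - 1:ℕ):ℝ)] :=
    le_of_tendsto hlim (Eventually.of_forall fun k => key (sk k) (hsk0 k) (hsk1 k))
  -- conclude via variance formula
  have hv : variance (fun ω => (η ω:ℝ)) μ
      = μ[fun ω => (η ω:ℝ) * ((η ω - 1:ℕ):ℝ)] + μ[fun ω => (η ω:ℝ)]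
        - (μ[fun ω => (η ω:ℝ)])^2 := by
    rw [variance_eq_sub h2]
    have he : μ[(fun ω => (η ω:ℝ))^2]
        = μ[fun ω => (η ω:ℝ) * ((η ω - 1:ℕ):ℝ)] + μ[fun ω => (η ω:ℝ)] := by
      rw [← integral_add hQint hint]
      congr 1
      funext ω
      simp [Q_eq]
    rw [he]
  have hv' : variance (fun ω => (η' ω:ℝ)) μ
      = μ[fun ω => (η' ω:ℝ) * ((η' ω - 1:ℕ):ℝ)] + μ[fun ω => (η' ω:ℝ)]
        - (μ[fun ω => (η' ω:ℝ)])^2 := by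
    rw [variance_eq_sub h2']
    have he : μ[(fun ω => (η' ω:ℝ))^2]
        = μ[fun ω => (η' ω:ℝ) * ((η' ω - 1:ℕ):ℝ)] + μ[fun ω => (η' ω:ℝ)] := by
      rw [← integral_add hQint' hint']
      congr 1
      funext ω
      simp [Q_eq]
    rw [he]
  rw [hv, hv', hmean]
  linarith
end

section
/- Let Λ and Λ̃ be nonnegative random variables with finite second moments and equal means E[Λ] = E[Λ̃]. If for every s ∈ [0,1] one has E[Λ·e^{−sΛ}]·E[e^{−sΛ̃}] ≥ E[Λ̃·e^{−sΛ̃}]·E[e^{−sΛ}], then Var[Λ] ≤ Var[Λ̃]. -/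
open MeasureTheory ProbabilityTheory

open Filter Topology

section Aux

variable {Ω : Type*} [MeasurableSpace Ω] (μ : Measure Ω) [IsProbabilityMeasure μ]

/-- integrability of `e^{-sX}` -/
lemma aux_int_exp (X : Ω → ℝ) (hX : Measurable X) (h0 : ∀ ω, 0 ≤ X ω) {s : ℝ} (hs : 0 ≤ s) :
    Integrable (fun ω => Real.exp (-s * X ω)) μ := by
  refine Integrable.mono' (integrable_const 1) ?_ ?_
  · exact ((hX.const_mul (-s)).exp).aestronglyMeasurable
  · refine Filter.Eventually.of_forall fun ω => ?_
    rw [Real.norm_eq_abs, abs_of_pos (Real.exp_pos _), Real.exp_le_one_iff]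
    have := h0 ω
    nlinarith

omit [IsProbabilityMeasure μ] in
lemma aux_int_mul_exp (X : Ω → ℝ) (hX : Measurable X) (h0 : ∀ ω, 0 ≤ X ω)
    (hint : Integrable X μ) {s : ℝ} (hs : 0 ≤ s) :
    Integrable (fun ω => X ω * Real.exp (-s * X ω)) μ := by
  refine Integrable.mono' hint ?_ ?_
  · exact (hX.mul ((hX.const_mul (-s)).exp)).aestronglyMeasurable
  · refine Filter.Eventually.of_forall fun ω => ?_
    rw [Real.norm_eq_abs]
    have h1 : Real.exp (-s * X ω) ≤ 1 := by
      rw [Real.exp_le_one_iff]; have := h0 ω; nlinarith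
    have h2 := Real.exp_pos (-s * X ω)
    have := h0 ω
    rw [abs_of_nonneg (by positivity)]
    nlinarith

/-- `∫ e^{-sX} → 1` as `s → 0+`. -/
lemma aux_tendsto_exp (X : Ω → ℝ) (hX : Measurable X) (h0 : ∀ ω, 0 ≤ X ω) :
    Tendsto (fun s => ∫ ω, Real.exp (-s * X ω) ∂μ) (𝓝[>] (0:ℝ)) (𝓝 1) := by
  have h1 : (1 : ℝ) = ∫ _ : Ω, (1:ℝ) ∂μ := by simp
  rw [h1]
  refine tendsto_integral_filter_of_dominated_convergence (fun _ => (1:ℝ)) ?_ ?_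
    (integrable_const 1) ?_
  · exact Filter.Eventually.of_forall fun s =>
      ((hX.const_mul (-s)).exp).aestronglyMeasurable
  · filter_upwards [self_mem_nhdsWithin] with s hs
    refine Filter.Eventually.of_forall fun ω => ?_
    rw [Real.norm_eq_abs, abs_of_pos (Real.exp_pos _), Real.exp_le_one_iff]
    have := h0 ω; have : (0:ℝ) < s := hs; nlinarith
  · refine Filter.Eventually.of_forall fun ω => ?_
    have : Tendsto (fun s : ℝ => Real.exp (-s * X ω)) (𝓝 0) (𝓝 (Real.exp (-0 * X ω))) := by
      exact (Real.continuous_exp.comp ((continuous_neg.mul continuous_const))).tendsto 0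
    simpa using this.mono_left nhdsWithin_le_nhds

/-- pointwise slope limit: `(e^{-sc} - 1)/s → -c` as `s → 0+`. -/
lemma aux_slope (c : ℝ) :
    Tendsto (fun s : ℝ => (Real.exp (-s * c) - 1) / s) (𝓝[>] (0:ℝ)) (𝓝 (-c)) := by
  have hd : HasDerivAt (fun s : ℝ => Real.exp (-s * c)) (-c) 0 := by
    have h : HasDerivAt (fun s : ℝ => -s * c) (-c) 0 := by
      simpa using ((hasDerivAt_id (0:ℝ)).neg.mul_const c)
    simpa using h.exp
  have := (hasDerivAt_iff_tendsto_slope.mp hd).mono_left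
    (nhdsWithin_mono _ (fun x hx => by simp [Set.mem_Ioi] at hx ⊢; exact ne_of_gt hx))
  refine this.congr fun s => ?_
  simp [slope_def_field, div_eq_mul_inv]

end Aux

section Aux2

variable {Ω : Type*} [MeasurableSpace Ω] (μ : Measure Ω) [IsProbabilityMeasure μ]

lemma aux_tendsto_quot_exp (X : Ω → ℝ) (hX : Measurable X) (h0 : ∀ ω, 0 ≤ X ω)
    (hint : Integrable X μ) :
    Tendsto (fun s => ((∫ ω, Real.exp (-s * X ω) ∂μ) - 1) / s) (𝓝[>] (0:ℝ))
      (𝓝 (-∫ ω, X ω ∂μ)) := by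
  have key : Tendsto (fun s => ∫ ω, (Real.exp (-s * X ω) - 1) / s ∂μ) (𝓝[>] (0:ℝ))
      (𝓝 (∫ ω, -X ω ∂μ)) := by
    refine tendsto_integral_filter_of_dominated_convergence X ?_ ?_ hint ?_
    · exact Filter.Eventually.of_forall fun s =>
        ((((hX.const_mul (-s)).exp.sub measurable_const).div_const s)).aestronglyMeasurable
    · filter_upwards [self_mem_nhdsWithin] with s hs
      refine Filter.Eventually.of_forall fun ω => ?_
      have hs' : (0:ℝ) < s := hs
      have hb := Real.add_one_le_exp (-(s * X ω))
      have he : Real.exp (-s * X ω) ≤ 1 := by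
        rw [Real.exp_le_one_iff]; have := h0 ω; nlinarith
      rw [Real.norm_eq_abs, abs_div, abs_of_pos hs', abs_of_nonpos (by linarith),
        div_le_iff₀ hs']
      have : Real.exp (-(s * X ω)) = Real.exp (-s * X ω) := by ring_nf
      nlinarith [this ▸ hb]
    · exact Filter.Eventually.of_forall fun ω => aux_slope (X ω)
  rw [integral_neg] at key
  refine key.congr' ?_
  filter_upwards [self_mem_nhdsWithin] with s hs
  have hs' : (0:ℝ) < s := hs
  rw [integral_div, integral_sub (aux_int_exp μ X hX h0 hs'.le) (integrable_const 1)]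
  simp

lemma aux_tendsto_quot_mul (X : Ω → ℝ) (hX : Measurable X) (h0 : ∀ ω, 0 ≤ X ω)
    (h2 : MemLp X 2 μ) :
    Tendsto (fun s => ((∫ ω, X ω * Real.exp (-s * X ω) ∂μ) - ∫ ω, X ω ∂μ) / s)
      (𝓝[>] (0:ℝ)) (𝓝 (-∫ ω, X ω ^ 2 ∂μ)) := by
  have hint : Integrable X μ := h2.integrable (by norm_num)
  have hsq : Integrable (fun ω => X ω ^ 2) μ := h2.integrable_sq
  have key : Tendsto (fun s => ∫ ω, X ω * (Real.exp (-s * X ω) - 1) / s ∂μ) (𝓝[>] (0:ℝ))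
      (𝓝 (∫ ω, -(X ω ^ 2) ∂μ)) := by
    refine tendsto_integral_filter_of_dominated_convergence (fun ω => X ω ^ 2) ?_ ?_ hsq ?_
    · exact Filter.Eventually.of_forall fun s =>
        ((hX.mul ((hX.const_mul (-s)).exp.sub measurable_const)).div_const s).aestronglyMeasurable
    · filter_upwards [self_mem_nhdsWithin] with s hs
      refine Filter.Eventually.of_forall fun ω => ?_
      have hs' : (0:ℝ) < s := hs
      have hb := Real.add_one_le_exp (-(s * X ω))
      have he : Real.exp (-s * X ω) ≤ 1 := by
        rw [Real.exp_le_one_iff]; have := h0 ω; nlinarith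
      have hx := h0 ω
      have heq : Real.exp (-(s * X ω)) = Real.exp (-s * X ω) := by ring_nf
      rw [heq] at hb
      rw [Real.norm_eq_abs, abs_div, abs_of_pos hs', abs_mul, abs_of_nonneg hx,
        abs_of_nonpos (by linarith), div_le_iff₀ hs']
      nlinarith
    · refine Filter.Eventually.of_forall fun ω => ?_
      have h := (aux_slope (X ω)).const_mul (X ω)
      have he : X ω * -X ω = -(X ω ^ 2) := by ring
      rw [he] at h
      exact h.congr fun s => by ring
  rw [integral_neg] at key
  refine key.congr' ?_
  filter_upwards [self_mem_nhdsWithin] with s hs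
  have hs' : (0:ℝ) < s := hs
  have h1 : ∀ ω, X ω * (Real.exp (-s * X ω) - 1) / s
      = (X ω * Real.exp (-s * X ω) - X ω) / s := fun ω => by ring
  simp_rw [h1]
  rw [integral_div, integral_sub (aux_int_mul_exp μ X hX h0 hint hs'.le) hint]

end Aux2

/-- If `Λ` and `Λ̃` are nonnegative random variables with finite second moments, equal
means, and for every `s ∈ [0,1]` one has
`E[Λ·e^{−sΛ}]·E[e^{−sΛ̃}] ≥ E[Λ̃·e^{−sΛ̃}]·E[e^{−sΛ}]`, then `Var[Λ] ≤ Var[Λ̃]`. -/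
theorem variance_le_of_first_cumulant_order
    {Ω : Type*} [MeasurableSpace Ω] (μ : Measure Ω) [IsProbabilityMeasure μ]
    (Λ Λ' : Ω → ℝ) (hΛ : Measurable Λ) (hΛ' : Measurable Λ')
    (h0 : ∀ ω, 0 ≤ Λ ω) (h0' : ∀ ω, 0 ≤ Λ' ω)
    (h2 : MemLp Λ 2 μ) (h2' : MemLp Λ' 2 μ)
    (hmean : μ[Λ] = μ[Λ'])
    (hord : ∀ s ∈ Set.Icc (0 : ℝ) 1,
      (μ[fun ω => Λ' ω * Real.exp (-s * Λ' ω)]) * (μ[fun ω => Real.exp (-s * Λ ω)]) ≤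
      (μ[fun ω => Λ ω * Real.exp (-s * Λ ω)]) * (μ[fun ω => Real.exp (-s * Λ' ω)])) :
    variance Λ μ ≤ variance Λ' μ := by
  have hintΛ : Integrable Λ μ := h2.integrable (by norm_num)
  have hintΛ' : Integrable Λ' μ := h2'.integrable (by norm_num)
  set m : ℝ := μ[Λ] with hm
  -- the four basic limits
  have tB := aux_tendsto_exp μ Λ hΛ h0
  have tB' := aux_tendsto_exp μ Λ' hΛ' h0'
  have tqB := aux_tendsto_quot_exp μ Λ hΛ h0 hintΛ
  have tqB' := aux_tendsto_quot_exp μ Λ' hΛ' h0' hintΛ'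
  have tqA := aux_tendsto_quot_mul μ Λ hΛ h0 h2
  have tqA' := aux_tendsto_quot_mul μ Λ' hΛ' h0' h2'
  -- combined limit
  set A : ℝ → ℝ := fun s => ∫ ω, Λ ω * Real.exp (-s * Λ ω) ∂μ with hA
  set A' : ℝ → ℝ := fun s => ∫ ω, Λ' ω * Real.exp (-s * Λ' ω) ∂μ with hA'
  set B : ℝ → ℝ := fun s => ∫ ω, Real.exp (-s * Λ ω) ∂μ with hB
  set B' : ℝ → ℝ := fun s => ∫ ω, Real.exp (-s * Λ' ω) ∂μ with hB'
  have tG : Tendsto (fun s => ((A s - m) / s) * B' s + m * ((B' s - 1) / s)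
      - (((A' s - m) / s) * B s + m * ((B s - 1) / s))) (𝓝[>] (0:ℝ))
      (𝓝 ((-∫ ω, Λ ω ^ 2 ∂μ) * 1 + m * (-∫ ω, Λ' ω ∂μ)
        - ((-∫ ω, Λ' ω ^ 2 ∂μ) * 1 + m * (-∫ ω, Λ ω ∂μ)))) := by
    have h1 : Tendsto (fun s => (A s - m) / s) (𝓝[>] (0:ℝ)) (𝓝 (-∫ ω, Λ ω ^ 2 ∂μ)) := tqA
    have h2t : Tendsto (fun s => (A' s - m) / s) (𝓝[>] (0:ℝ)) (𝓝 (-∫ ω, Λ' ω ^ 2 ∂μ)) := by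
      rw [← hmean] at tqA'; exact tqA'
    exact ((h1.mul tB').add (tqB'.const_mul m)).sub ((h2t.mul tB).add (tqB.const_mul m))
  -- eventual nonnegativity
  have hev : ∀ᶠ s in 𝓝[>] (0:ℝ), 0 ≤ ((A s - m) / s) * B' s + m * ((B' s - 1) / s)
      - (((A' s - m) / s) * B s + m * ((B s - 1) / s)) := by
    filter_upwards [self_mem_nhdsWithin,
      (eventually_le_nhds (zero_lt_one)).filter_mono nhdsWithin_le_nhds] with s hs hs1
    have hs' : (0:ℝ) < s := hs
    have hne : s ≠ 0 := ne_of_gt hs'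
    have hord' := hord s ⟨hs'.le, hs1⟩
    have heq : ((A s - m) / s) * B' s + m * ((B' s - 1) / s)
        - (((A' s - m) / s) * B s + m * ((B s - 1) / s))
        = (A s * B' s - A' s * B s) / s := by
      field_simp
      ring
    rw [heq]
    have : (0:ℝ) ≤ A s * B' s - A' s * B s := by
      simp only [hA, hA', hB, hB']
      linarith [hord']
    positivity
  have hlim := ge_of_tendsto tG hev
  have hkey : ∫ ω, Λ ω ^ 2 ∂μ ≤ ∫ ω, Λ' ω ^ 2 ∂μ := by
    rw [← hmean] at hlim
    nlinarith [hlim]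
  rw [variance_eq_sub h2, variance_eq_sub h2']
  have e1 : μ[Λ ^ 2] = ∫ ω, Λ ω ^ 2 ∂μ := by rfl
  have e2 : μ[Λ' ^ 2] = ∫ ω, Λ' ω ^ 2 ∂μ := by rfl
  have hmm : (∫ x, Λ x ∂μ) = ∫ x, Λ' x ∂μ := hmean
  rw [e1, e2, hmm]
  linarith
end

section
/- Let η be negative binomial with parameters (p,r) and η̃ negative binomial with parameters (p̃,r̃), where p, p̃ ∈ (0,1) and r, r̃ ≥ 1 are integers. (a) If p = p̃ and r ≤ r̃, then η <_{l-g} η̃, i.e. for every s ∈ [0,1]: (p/(r(1−p)))·Σ_{k≥1} k·s^{k−1}·C(k+r−1,k)·p^r·(1−p)^k ≥ (p/(r̃(1−p)))·Σ_{k≥1} k·s^{k−1}·C(k+r̃−1,k)·p^{r̃}·(1−p)^k. (b) If r = r̃ and p ≥ p̃, then likewise η <_{l-g} η̃. -/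
lemma negBinom_lb_sum (p s : ℝ) (r : ℕ) (hr : 1 ≤ r) (hp0 : 0 < p) (hp1 : p < 1)
    (hs0 : 0 ≤ s) (hs1 : s ≤ 1) :
    ∑' k : ℕ, (k : ℝ) * s ^ (k - 1) * (((k + r - 1).choose k : ℝ) * p ^ r * (1 - p) ^ k)
      = (r : ℝ) * (1 - p) * p ^ r / (1 - (1 - p) * s) ^ (r + 1) := by
  set q : ℝ := 1 - p with hq
  have hq0 : 0 ≤ q := by simp only [hq]; linarith
  have hqs : ‖q * s‖ < 1 := by
    rw [Real.norm_eq_abs, abs_of_nonneg (mul_nonneg hq0 hs0)]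
    nlinarith
  have hsum2 := (hasSum_choose_mul_geometric_of_norm_lt_one (𝕜 := ℝ) r hqs).mul_left
    ((r : ℝ) * q * p ^ r)
  have key : HasSum (fun k : ℕ =>
      (k : ℝ) * s ^ (k - 1) * (((k + r - 1).choose k : ℝ) * p ^ r * q ^ k))
      ((r : ℝ) * q * p ^ r / (1 - q * s) ^ (r + 1)) := by
    apply (hasSum_nat_add_iff' 1).mp
    simp only [Finset.range_one, Finset.sum_singleton, Nat.cast_zero, zero_mul, sub_zero]
    convert hsum2 using 1 with j
    · rfl
    · funext j
      have hch : (j + r).choose (j + 1) * (j + 1) = (j + r).choose j * r := by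
        have := Nat.choose_succ_right_eq (j + r) j
        simpa using this
      have hch' : ((j + r).choose (j + 1) : ℝ) * ((j : ℝ) + 1)
          = ((j + r).choose j : ℝ) * (r : ℝ) := by exact_mod_cast hch
      have hsymm : (j + r).choose r = (j + r).choose j := by
        rw [← Nat.choose_symm (Nat.le_add_left r j)]
        congr 1
        omega
      have hidx : j + 1 + r - 1 = j + r := by omega
      simp only [Nat.add_sub_cancel, hidx, hsymm, Nat.cast_add, Nat.cast_one, mul_pow]
      linear_combination (s ^ j * p ^ r * q ^ (j + 1)) * hch'
    · field_simp
  rw [key.tsum_eq]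

lemma negBinom_lb_closed (p s : ℝ) (r : ℕ) (hr : 1 ≤ r) (hp0 : 0 < p) (hp1 : p < 1)
    (hs0 : 0 ≤ s) (hs1 : s ≤ 1) :
    p / ((r : ℝ) * (1 - p)) *
      ∑' k : ℕ, (k : ℝ) * s ^ (k - 1) * (((k + r - 1).choose k : ℝ) * p ^ r * (1 - p) ^ k)
      = (p / (1 - (1 - p) * s)) ^ (r + 1) := by
  rw [negBinom_lb_sum p s r hr hp0 hp1 hs0 hs1, div_pow]
  have hD : 0 < 1 - (1 - p) * s := by nlinarith
  have hr0 : (0 : ℝ) < r := by exact_mod_cast hr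
  have hq : (1 : ℝ) - p ≠ 0 := by linarith
  field_simp
  ring

/-- Length-biased pgf ordering for negative binomial distributions: with `η` negative
binomial(p,r) and `η̃` negative binomial(p̃,r̃), (a) if `p = p̃` and `r ≤ r̃` then
`η <_{l-g} η̃`; (b) if `r = r̃` and `p ≥ p̃` then `η <_{l-g} η̃`. -/
theorem negBinomial_lengthBiased_pgf_order (p p' : ℝ) (r r' : ℕ)
    (hp : p ∈ Set.Ioo (0 : ℝ) 1) (hp' : p' ∈ Set.Ioo (0 : ℝ) 1)
    (hr : 1 ≤ r) (hr' : 1 ≤ r') :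
    ((p = p' ∧ r ≤ r') → ∀ s ∈ Set.Icc (0 : ℝ) 1,
      p' / ((r' : ℝ) * (1 - p')) *
          ∑' k : ℕ, (k : ℝ) * s ^ (k - 1) * (((k + r' - 1).choose k : ℝ) * p' ^ r' * (1 - p') ^ k)
        ≤ p / ((r : ℝ) * (1 - p)) *
          ∑' k : ℕ, (k : ℝ) * s ^ (k - 1) * (((k + r - 1).choose k : ℝ) * p ^ r * (1 - p) ^ k)) ∧
    ((r = r' ∧ p' ≤ p) → ∀ s ∈ Set.Icc (0 : ℝ) 1,
      p' / ((r' : ℝ) * (1 - p')) *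
          ∑' k : ℕ, (k : ℝ) * s ^ (k - 1) * (((k + r' - 1).choose k : ℝ) * p' ^ r' * (1 - p') ^ k)
        ≤ p / ((r : ℝ) * (1 - p)) *
          ∑' k : ℕ, (k : ℝ) * s ^ (k - 1) * (((k + r - 1).choose k : ℝ) * p ^ r * (1 - p) ^ k)) := by
  obtain ⟨hp0, hp1⟩ := hp
  obtain ⟨hp0', hp1'⟩ := hp'
  constructor
  · rintro ⟨rfl, hrr⟩ s ⟨hs0, hs1⟩
    rw [negBinom_lb_closed p s r hr hp0 hp1 hs0 hs1,
      negBinom_lb_closed p s r' hr' hp0 hp1 hs0 hs1]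
    have hD : 0 < 1 - (1 - p) * s := by nlinarith
    have ht0 : 0 ≤ p / (1 - (1 - p) * s) := div_nonneg hp0.le hD.le
    have ht1 : p / (1 - (1 - p) * s) ≤ 1 := by
      rw [div_le_one hD]; nlinarith
    exact pow_le_pow_of_le_one ht0 ht1 (by omega)
  · rintro ⟨rfl, hpp⟩ s ⟨hs0, hs1⟩
    rw [negBinom_lb_closed p s r hr hp0 hp1 hs0 hs1,
      negBinom_lb_closed p' s r hr hp0' hp1' hs0 hs1]
    have hD : 0 < 1 - (1 - p) * s := by nlinarith
    have hD' : 0 < 1 - (1 - p') * s := by nlinarith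
    have ht0 : 0 ≤ p' / (1 - (1 - p') * s) := div_nonneg hp0'.le hD'.le
    have hmono : p' / (1 - (1 - p') * s) ≤ p / (1 - (1 - p) * s) := by
      rw [div_le_div_iff₀ hD' hD]
      nlinarith [mul_nonneg (sub_nonneg.mpr hpp) (sub_nonneg.mpr hs1)]
    exact pow_le_pow_left₀ ht0 hmono (r + 1)
end

section
/- Let α, β, α̃, β̃ > 0. Then the inequality α/(β+s) ≥ α̃/(β̃+s) holds for all s ≥ 0 if and only if α ≥ α̃ and α·β̃ ≥ α̃·β (i.e. α/β ≥ α̃/β̃). Consequently, a Gamma(α,β) random variable Λ and a Gamma(α̃,β̃) random variable Λ̃ satisfy E[Λ·e^{−sΛ}]/E[e^{−sΛ}] ≥ E[Λ̃·e^{−sΛ̃}]/E[e^{−sΛ̃}] for all s ≥ 0 (the first cumulant order Λ <_{cum} Λ̃) if and only if α ≥ α̃ and α/β ≥ α̃/β̃. -/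
open MeasureTheory ProbabilityTheory Real Set


lemma gammaMeasure_Iic_zero {a r : ℝ} : gammaMeasure a r (Iic 0) = 0 := by
  rw [gammaMeasure, withDensity_apply _ measurableSet_Iic,
    setLIntegral_congr (Filter.EventuallyEq.symm Iio_ae_eq_Iic),
    lintegral_gammaPDF_of_nonpos le_rfl]

lemma measurable_gammaPDF (a r : ℝ) : Measurable (gammaPDF a r) :=
  (measurable_gammaPDFReal a r).ennreal_ofReal

lemma gamma_integral_eq (α β : ℝ) (hα : 0 < α) (hβ : 0 < β) (f : ℝ → ℝ)
    (hf : Measurable f) (hf0 : ∀ x : ℝ, 0 < x → 0 ≤ f x) :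
    ∫ x, f x ∂(gammaMeasure α β)
      = ∫ x in Ioi (0:ℝ), β ^ α / Real.Gamma α * x ^ (α - 1) * Real.exp (-(β * x)) * f x := by
  have hae : ∀ᵐ x ∂(gammaMeasure α β), 0 ≤ f x := by
    have h0 : ∀ᵐ x ∂(gammaMeasure α β), 0 < x := by
      rw [ae_iff]
      have : {x : ℝ | ¬ 0 < x} = Iic 0 := by ext x; simp
      rw [this]; exact gammaMeasure_Iic_zero
    filter_upwards [h0] with x hx using hf0 x hx
  rw [integral_eq_lintegral_of_nonneg_ae hae hf.aestronglyMeasurable]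
  rw [gammaMeasure, lintegral_withDensity_eq_lintegral_mul _ (measurable_gammaPDF α β)
    (hf.ennreal_ofReal)]
  rw [← lintegral_add_compl _ measurableSet_Ici]
  have h1 : ∫⁻ x in (Ici (0:ℝ))ᶜ, (gammaPDF α β * fun a => ENNReal.ofReal (f a)) x = 0 := by
    rw [compl_Ici]
    rw [setLIntegral_congr_fun measurableSet_Iio (g := fun _ => 0)
      (fun x hx => by
        simp [gammaPDF_of_neg (show x < 0 from hx)])]
    simp
  have h2 : ∫⁻ x in Ici (0:ℝ), (gammaPDF α β * fun a => ENNReal.ofReal (f a)) x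
      = ∫⁻ x in Ioi (0:ℝ),
        ENNReal.ofReal (β ^ α / Real.Gamma α * x ^ (α - 1) * Real.exp (-(β * x)) * f x) := by
    rw [setLIntegral_congr (Filter.EventuallyEq.symm Ioi_ae_eq_Ici)]
    refine setLIntegral_congr_fun measurableSet_Ioi (fun x hx => ?_)
    have hx : (0:ℝ) < x := hx
    simp only [Pi.mul_apply, gammaPDF_of_nonneg hx.le]
    rw [← ENNReal.ofReal_mul (by positivity)]
  rw [h1, h2, add_zero]
  rw [integral_eq_lintegral_of_nonneg_ae]
  · refine (ae_restrict_iff' measurableSet_Ioi).2 (Filter.Eventually.of_forall fun x hx => ?_)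
    have hx : (0:ℝ) < x := hx
    have := hf0 x hx
    positivity
  · exact (((((measurable_id.pow_const _).const_mul _).mul
      ((measurable_id.const_mul _).neg.exp)).mul hf)).aestronglyMeasurable.restrict

lemma gamma_exp_integral (α β s : ℝ) (hα : 0 < α) (hβ : 0 < β) (hs : 0 ≤ s) :
    ∫ x, Real.exp (-s * x) ∂(gammaMeasure α β) = (β / (β + s)) ^ α := by
  have hbs : 0 < β + s := by linarith
  rw [gamma_integral_eq α β hα hβ (fun x => Real.exp (-s * x)) (by fun_prop)
    (fun x _ => (Real.exp_pos _).le)]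
  have hcong : ∀ x ∈ Set.Ioi (0:ℝ),
      β ^ α / Real.Gamma α * x ^ (α - 1) * Real.exp (-(β * x)) * Real.exp (-s * x)
        = β ^ α / Real.Gamma α * (x ^ (α - 1) * Real.exp (-((β + s) * x))) := by
    intro x hx
    have hexp : Real.exp (-(β * x)) * Real.exp (-s * x) = Real.exp (-((β + s) * x)) := by
      rw [← Real.exp_add]; ring_nf
    rw [← hexp]; ring
  rw [setIntegral_congr_fun measurableSet_Ioi hcong, integral_const_mul,
    integral_rpow_mul_exp_neg_mul_Ioi hα hbs]
  rw [div_rpow hβ.le hbs.le, div_rpow zero_le_one hbs.le, one_rpow]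
  have hG := (Real.Gamma_pos_of_pos hα).ne'
  have hp : ((β + s):ℝ) ^ α ≠ 0 := (Real.rpow_pos_of_pos hbs α).ne'
  field_simp

lemma gamma_id_exp_integral (α β s : ℝ) (hα : 0 < α) (hβ : 0 < β) (hs : 0 ≤ s) :
    ∫ x, x * Real.exp (-s * x) ∂(gammaMeasure α β)
      = α / (β + s) * (β / (β + s)) ^ α := by
  have hbs : 0 < β + s := by linarith
  rw [gamma_integral_eq α β hα hβ (fun x => x * Real.exp (-s * x)) (by fun_prop)
    (fun x hx => by positivity)]
  have hcong : ∀ x ∈ Set.Ioi (0:ℝ),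
      β ^ α / Real.Gamma α * x ^ (α - 1) * Real.exp (-(β * x)) * (x * Real.exp (-s * x))
        = β ^ α / Real.Gamma α * (x ^ ((α + 1) - 1) * Real.exp (-((β + s) * x))) := by
    intro x hx
    have hx' : (0:ℝ) < x := hx
    have hexp : Real.exp (-(β * x)) * Real.exp (-s * x) = Real.exp (-((β + s) * x)) := by
      rw [← Real.exp_add]; ring_nf
    have hxpow : x ^ ((α + 1) - 1) = x ^ (α - 1) * x := by
      rw [show (α + 1) - 1 = (α - 1) + 1 by ring, Real.rpow_add hx', Real.rpow_one]
    rw [hxpow, ← hexp]; ring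
  rw [setIntegral_congr_fun measurableSet_Ioi hcong, integral_const_mul,
    integral_rpow_mul_exp_neg_mul_Ioi (by linarith) hbs]
  rw [Real.Gamma_add_one hα.ne', div_rpow zero_le_one hbs.le, one_rpow,
    div_rpow hβ.le hbs.le]
  have hsplit : ((β + s):ℝ) ^ (α + 1) = (β + s) ^ α * (β + s) := by
    rw [Real.rpow_add hbs, Real.rpow_one]
  have hG := (Real.Gamma_pos_of_pos hα).ne'
  have hp : ((β + s):ℝ) ^ α ≠ 0 := (Real.rpow_pos_of_pos hbs α).ne'
  rw [hsplit]
  field_simp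

lemma ratio_iff (α β α' β' : ℝ)
    (hα : 0 < α) (hβ : 0 < β) (hα' : 0 < α') (hβ' : 0 < β') :
    (∀ s : ℝ, 0 ≤ s → α' / (β' + s) ≤ α / (β + s)) ↔ (α' ≤ α ∧ α' * β ≤ α * β') := by
  constructor
  · intro h
    constructor
    · by_contra hc
      push_neg at hc
      set s := max 0 ((α * β' - α' * β) / (α' - α)) + 1 with hsdef
      have hs0 : 0 ≤ s := by positivity
      have hgt : (α * β' - α' * β) / (α' - α) < s := by
        have := le_max_right 0 ((α * β' - α' * β) / (α' - α)); linarith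
      have h2 := (div_le_div_iff₀ (by linarith) (by linarith)).1 (h s hs0)
      have hda : 0 < α' - α := by linarith
      rw [div_lt_iff₀ hda] at hgt
      nlinarith
    · have h0 := h 0 le_rfl
      simp only [add_zero] at h0
      exact (div_le_div_iff₀ hβ' hβ).1 h0
  · rintro ⟨h1, h2⟩ s hs
    rw [div_le_div_iff₀ (by linarith) (by linarith)]
    nlinarith

/-- `α/(β+s) ≥ α̃/(β̃+s)` for all `s ≥ 0` iff `α ≥ α̃` and `α·β̃ ≥ α̃·β`; consequently, a
Gamma(α,β) random variable dominates a Gamma(α̃,β̃) one in the first cumulant order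
`<_{cum}` iff `α ≥ α̃` and `α/β ≥ α̃/β̃`. -/
theorem gamma_first_cumulant_order_iff (α β α' β' : ℝ)
    (hα : 0 < α) (hβ : 0 < β) (hα' : 0 < α') (hβ' : 0 < β') :
    ((∀ s : ℝ, 0 ≤ s → α' / (β' + s) ≤ α / (β + s)) ↔ (α' ≤ α ∧ α' * β ≤ α * β')) ∧
    ((∀ s : ℝ, 0 ≤ s →
        (∫ x, x * Real.exp (-s * x) ∂(gammaMeasure α' β')) /
            (∫ x, Real.exp (-s * x) ∂(gammaMeasure α' β'))
          ≤ (∫ x, x * Real.exp (-s * x) ∂(gammaMeasure α β)) /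
            (∫ x, Real.exp (-s * x) ∂(gammaMeasure α β)))
      ↔ (α' ≤ α ∧ α' * β ≤ α * β')) := by
  have hr : ∀ (a b : ℝ), 0 < a → 0 < b → ∀ s : ℝ, 0 ≤ s →
      (∫ x, x * Real.exp (-s * x) ∂(gammaMeasure a b)) /
        (∫ x, Real.exp (-s * x) ∂(gammaMeasure a b)) = a / (b + s) := by
    intro a b ha hb s hs
    rw [gamma_exp_integral a b s ha hb hs, gamma_id_exp_integral a b s ha hb hs,
      mul_div_assoc, div_self (Real.rpow_pos_of_pos (by positivity) a).ne', mul_one]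
  refine ⟨ratio_iff α β α' β' hα hβ hα' hβ', ?_⟩
  rw [← ratio_iff α β α' β' hα hβ hα' hβ']
  constructor
  · intro h s hs
    have := h s hs
    rwa [hr α β hα hβ s hs, hr α' β' hα' hβ' s hs] at this
  · intro h s hs
    rw [hr α β hα hβ s hs, hr α' β' hα' hβ' s hs]
    exact h s hs
end
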